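/- Suppose that φ(q_i) < M_i − 1 for all sufficiently large i. Then for all sufficiently large i, the point 1/q_i belongs to E. In particular, E contains the sequence a_i = 1/q_i, which tends to 0 and satisfies a_{i+1}/a_i = q_i^(1 − M_i) → 0 as i → ∞. -/

import Mathlib

open Filter Set Metric Pointwise

/-- If `φ(q i) < M i - 1` eventually, then `1 / q i ∈ E` for all
sufficiently large `i`; the sequence `1 / q i` tends to `0` and the ratios
`(1/q (i+1)) / (1/q i) = q i ^ (1 - M i)` tend to `0`. -/
theorem falconer_rapid_sequence
    (M : ℕ → ℕ) (hMpos : ∀ i, 0 < M i) (hMmono : Monotone M)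
    (hMtop : Tendsto M atTop atTop)
    (q : ℕ → ℕ) (hq0 : q 0 = 2) (hqrec : ∀ i, q (i + 1) = q i ^ M i)
    (φ : ℝ → ℝ) (hφpos : ∀ t : ℝ, 2 ≤ t → 0 < φ t)
    (hφmono : MonotoneOn φ (Set.Ici (2 : ℝ)))
    (hφtop : Tendsto φ atTop atTop)
    (G : ℕ → Set ℝ)
    (hG : ∀ i, G i = {x : ℝ | ∃ k : ℤ, 0 ≤ k ∧ k ≤ (q i : ℤ) ∧ x = (k : ℝ) / (q i : ℝ)})
    (r : ℕ → ℝ) (hr : ∀ i, r i = (q i : ℝ) ^ (-φ ((q i : ℕ) : ℝ)))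
    (Ei : ℕ → Set ℝ)
    (hEi : ∀ i, Ei i = {x ∈ Set.Icc (0 : ℝ) 1 | Metric.infDist x (G i) ≤ r i})
    (E : Set ℝ) (hE : E = ⋂ i, Ei i)
    (hyp : ∀ᶠ i in atTop, φ ((q i : ℕ) : ℝ) < (M i : ℝ) - 1) :
    (∀ᶠ i in atTop, (1 : ℝ) / (q i : ℝ) ∈ E) ∧
      Tendsto (fun i => (1 : ℝ) / (q i : ℝ)) atTop (nhds 0) ∧
      (∀ i, ((1 : ℝ) / (q (i + 1) : ℝ)) / ((1 : ℝ) / (q i : ℝ)) =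
        (q i : ℝ) ^ ((1 : ℝ) - (M i : ℝ))) ∧
      Tendsto (fun i => ((1 : ℝ) / (q (i + 1) : ℝ)) / ((1 : ℝ) / (q i : ℝ)))
        atTop (nhds 0) := by
  -- basic facts about q
  have hq2 : ∀ i, 2 ≤ q i := by
    intro i
    induction i with
    | zero => simp [hq0]
    | succ n ih =>
      rw [hqrec]
      exact le_trans ih (Nat.le_self_pow (hMpos n).ne' _)
  have hqpos : ∀ i, 0 < q i := fun i => lt_of_lt_of_le (by norm_num) (hq2 i)
  have hqRpos : ∀ i, (0:ℝ) < (q i : ℝ) := fun i => by exact_mod_cast hqpos i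
  have hq1R : ∀ i, (1:ℝ) ≤ (q i : ℝ) := fun i => by
    have := hq2 i; exact_mod_cast le_trans one_le_two this
  have hqstep : ∀ i, q i ≤ q (i+1) := by
    intro i; rw [hqrec]; exact Nat.le_self_pow (hMpos i).ne' _
  have hqmono : Monotone q := monotone_nat_of_le_succ hqstep
  have hdvd : ∀ i j, i ≤ j → q i ∣ q j := by
    intro i j hij
    induction j, hij using Nat.le_induction with
    | base => exact dvd_rfl
    | succ n hn ih => rw [hqrec]; exact ih.trans (dvd_pow_self (q n) (hMpos n).ne')
  have hq_ge : ∀ i, M i ≤ q (i+1) := by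
    intro i; rw [hqrec]
    calc M i ≤ 2 ^ M i := Nat.le_of_lt (Nat.lt_two_pow_self (n := M i))
      _ ≤ q i ^ M i := Nat.pow_le_pow_left (hq2 i) _
  have hqtop : Tendsto q atTop atTop := by
    rw [← tendsto_add_atTop_iff_nat 1]
    exact tendsto_atTop_mono hq_ge hMtop
  have hqR : Tendsto (fun i => (q i : ℝ)) atTop atTop :=
    tendsto_natCast_atTop_atTop.comp hqtop
  have h0 : Tendsto (fun i => (1:ℝ)/(q i:ℝ)) atTop (nhds 0) := by
    simpa [one_div, Pi.inv_def] using hqR.inv_tendsto_atTop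
  have rpos : ∀ j, 0 < r j := by
    intro j; rw [hr]; exact Real.rpow_pos_of_pos (hqRpos j) _
  -- ratio identity
  have hratio : ∀ i, ((1:ℝ) / (q (i + 1) : ℝ)) / ((1:ℝ) / (q i : ℝ)) =
      (q i : ℝ) ^ ((1:ℝ) - (M i : ℝ)) := by
    intro i
    rw [Real.rpow_sub (hqRpos i), Real.rpow_one, Real.rpow_natCast, hqrec]
    have h1 : ((q i : ℕ):ℝ) ≠ 0 := (hqRpos i).ne'
    have h2 : ((q i : ℝ)) ^ (M i) ≠ 0 := pow_ne_zero _ h1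
    push_cast
    field_simp
  -- main eventual membership
  obtain ⟨N, hN⟩ := eventually_atTop.mp hyp
  have hsmall : ∀ᶠ i in atTop, ∀ j ∈ Set.Iio N, (1:ℝ)/(q i:ℝ) ≤ r j := by
    rw [eventually_all_finite (Set.finite_Iio N)]
    intro j _
    exact (h0.eventually_lt_const (rpos j)).mono fun i hi => hi.le
  have hmem : ∀ᶠ i in atTop, (1 : ℝ) / (q i : ℝ) ∈ E := by
    filter_upwards [hsmall] with i hi
    rw [hE, Set.mem_iInter]
    intro j
    rw [hEi]
    refine ⟨Set.mem_Icc.mpr ⟨by positivity, ?_⟩, ?_⟩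
    · rw [div_le_one (hqRpos i)]; exact hq1R i
    rcases le_or_gt i j with hij | hji
    · -- 1/q i is itself a grid point of G j
      have hx : (1:ℝ)/(q i:ℝ) ∈ G j := by
        rw [hG]
        refine ⟨((q j / q i : ℕ) : ℤ), Int.natCast_nonneg _, ?_, ?_⟩
        · exact_mod_cast Nat.div_le_self _ _
        · have hd := hdvd i j hij
          have hne : ((q i : ℕ):ℝ) ≠ 0 := (hqRpos i).ne'
          rw [Int.cast_natCast, Nat.cast_div hd hne]
          field_simp
          rw [div_self (hqRpos j).ne']
      calc Metric.infDist ((1:ℝ)/(q i:ℝ)) (G j)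
          ≤ dist ((1:ℝ)/(q i:ℝ)) ((1:ℝ)/(q i:ℝ)) := Metric.infDist_le_dist_of_mem hx
        _ = 0 := dist_self _
        _ ≤ r j := (rpos j).le
    · -- j < i : distance to 0 is 1/q i
      have h0mem : (0:ℝ) ∈ G j := by
        rw [hG]
        exact ⟨0, le_refl 0, Int.natCast_nonneg _, by simp⟩
      have hle : Metric.infDist ((1:ℝ)/(q i:ℝ)) (G j) ≤ (1:ℝ)/(q i:ℝ) := by
        have h : Metric.infDist ((1:ℝ)/(q i:ℝ)) (G j) ≤ dist ((1:ℝ)/(q i:ℝ)) 0 := Metric.infDist_le_dist_of_mem h0mem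
        have habs : dist ((1:ℝ)/(q i:ℝ)) 0 = (1:ℝ)/(q i:ℝ) := by
          rw [dist_zero_right, Real.norm_eq_abs, abs_of_nonneg (by positivity)]
        rwa [habs] at h
      refine hle.trans ?_
      rcases lt_or_ge j N with hjN | hNj
      · exact hi j hjN
      · have hji' : j + 1 ≤ i := hji
        have h1 : (1:ℝ)/(q i:ℝ) ≤ 1/(q (j+1) : ℝ) :=
          one_div_le_one_div_of_le (hqRpos (j+1)) (by exact_mod_cast hqmono hji')
        have h2 : (1:ℝ)/(q (j+1) : ℝ) = (q j:ℝ) ^ (-(M j : ℝ)) := by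
          rw [Real.rpow_neg (hqRpos j).le, Real.rpow_natCast, hqrec]
          push_cast
          rw [one_div]
        have h3 : (q j:ℝ) ^ (-(M j:ℝ)) ≤ r j := by
          rw [hr]
          apply Real.rpow_le_rpow_of_exponent_le (hq1R j)
          have := hN j hNj
          linarith
        exact h1.trans (h2 ▸ h3)
  refine ⟨hmem, h0, hratio, ?_⟩
  -- ratios tend to 0
  have key : ∀ i, q i * 2 ^ (M i - 1) ≤ q (i+1) := by
    intro i
    rw [hqrec]
    calc q i * 2 ^ (M i - 1) ≤ q i * q i ^ (M i - 1) :=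
          Nat.mul_le_mul_left _ (Nat.pow_le_pow_left (hq2 i) _)
      _ = q i ^ (M i - 1 + 1) := (pow_succ' _ _).symm
      _ = q i ^ M i := by rw [Nat.sub_add_cancel (hMpos i)]
  have hub : ∀ i, ((1:ℝ) / (q (i + 1) : ℝ)) / ((1:ℝ) / (q i : ℝ)) ≤
      ((2:ℝ) ^ (M i - 1))⁻¹ := by
    intro i
    have hA : ((1:ℝ) / (q (i + 1) : ℝ)) / ((1:ℝ) / (q i : ℝ)) =
        (q i : ℝ) / (q (i+1) : ℝ) := by
      field_simp
    rw [hA]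
    rw [div_le_iff₀ (hqRpos (i+1)), inv_mul_eq_div, le_div_iff₀ (by positivity)]
    have := key i
    calc (q i : ℝ) * (2:ℝ) ^ (M i - 1) = ((q i * 2 ^ (M i - 1) : ℕ) : ℝ) := by push_cast; ring
      _ ≤ ((q (i+1) : ℕ) : ℝ) := by exact_mod_cast this
  have hlb : ∀ i, (0:ℝ) ≤ ((1:ℝ) / (q (i + 1) : ℝ)) / ((1:ℝ) / (q i : ℝ)) := by
    intro i; positivity
  have hupper : Tendsto (fun i => ((2:ℝ) ^ (M i - 1))⁻¹) atTop (nhds 0) := by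
    have hg : Tendsto (fun n : ℕ => ((2:ℝ) ^ n)⁻¹) atTop (nhds 0) := by
      have := tendsto_pow_atTop_nhds_zero_of_lt_one (by norm_num : (0:ℝ) ≤ 1/2)
        (by norm_num : (1/2:ℝ) < 1)
      simpa [one_div, inv_pow] using this
    have hf : Tendsto (fun i => M i - 1) atTop atTop :=
      (tendsto_sub_atTop_nat 1).comp hMtop
    exact hg.comp hf
  exact tendsto_of_tendsto_of_tendsto_of_le_of_le tendsto_const_nhds hupper hlb hub
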